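/- The function w satisfies the conjugacy gluing condition on the hyperbola branch R: for every real θ₁ < θ₁⁻, writing x = −(σ₁₂θ₁ + μ₂)/σ₂₂ and y = √(−d(θ₁))/σ₂₂ for the conjugate roots x ± iy of γ(θ₁, ·) = 0, one has w(x + iy) = w(x − iy). -/

import Mathlib

/-- The cut plane `ℂ ∖ (−∞, −1]`. -/
def cutC : Set ℂ := {z : ℂ | z.im = 0 ∧ z.re ≤ -1}ᶜ

/-- `T` is an analytic function on the cut plane `ℂ ∖ (−∞, −1]` agreeing with
`x ↦ cos (a · arccos x)` on `(−1, 1]`. -/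
def IsChebyshev (a : ℝ) (T : ℂ → ℂ) : Prop :=
  (∀ z ∈ cutC, DifferentiableAt ℂ T z) ∧
  ∀ x : ℝ, x ∈ Set.Ioc (-1 : ℝ) 1 → T (x : ℂ) = ((Real.cos (a * Real.arccos x) : ℝ) : ℂ)

/-- The affine map `χ(θ₂) = −(2θ₂ − (θ₂⁺+θ₂⁻))/(θ₂⁺−θ₂⁻)`. -/
noncomputable def chiMap (θ2p θ2m : ℝ) (θ : ℂ) : ℂ :=
  -(2 * θ - ((θ2p : ℂ) + (θ2m : ℂ))) / ((θ2p : ℂ) - (θ2m : ℂ))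

open Real in
lemma neg_one_lt_cos_of_mem {x : ℝ} (h1 : -π < x) (h2 : x < π) : -1 < Real.cos x := by
  rcases lt_or_eq_of_le (Real.neg_one_le_cos x) with h | h
  · exact h
  · exfalso
    obtain ⟨k, hk⟩ := Real.cos_eq_neg_one_iff.1 h.symm
    rcases le_or_gt 0 k with hk0 | hk0
    · have : (0:ℝ) ≤ (k:ℝ) := by exact_mod_cast hk0
      nlinarith [Real.pi_pos]
    · have hk1 : k ≤ -1 := by omega
      have : (k:ℝ) ≤ -1 := by exact_mod_cast hk1
      nlinarith [Real.pi_pos]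

lemma cheb_eq {a : ℝ} {T : ℂ → ℂ} (hT : IsChebyshev a T) :
    ∀ u : ℂ, u.re ∈ Set.Ioo (-Real.pi) Real.pi →
      T (Complex.cos u) = Complex.cos ((a : ℂ) * u) := by
  set S : Set ℂ := Complex.re ⁻¹' Set.Ioo (-Real.pi) Real.pi with hS
  have hSo : IsOpen S := isOpen_Ioo.preimage Complex.continuous_re
  have hSc : IsPreconnected S := by
    have : Convex ℝ S := (convex_Ioo _ _).linear_preimage Complex.reLm
    exact this.isPreconnected
  have hcut : ∀ u ∈ S, Complex.cos u ∈ cutC := by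
    intro u hu
    have hu' : u.re ∈ Set.Ioo (-Real.pi) Real.pi := hu
    have h1 : Complex.cos u = ((Real.cos u.re * Real.cosh u.im : ℝ) : ℂ) -
        ((Real.sin u.re * Real.sinh u.im : ℝ) : ℂ) * Complex.I := by
      rw [Complex.cos_eq]; push_cast; ring
    simp only [cutC, Set.mem_compl_iff, Set.mem_setOf_eq, not_and, not_le]
    intro him
    have him' : Real.sin u.re * Real.sinh u.im = 0 := by
      rw [h1] at him
      simp only [Complex.sub_im, Complex.ofReal_im, Complex.mul_im, Complex.ofReal_re,
        Complex.I_im, Complex.I_re, mul_zero, mul_one, zero_sub, zero_mul, add_zero,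
        neg_eq_zero, zero_add] at him
      exact him
    have hre' : (Complex.cos u).re = Real.cos u.re * Real.cosh u.im := by
      rw [h1]
      simp only [Complex.sub_re, Complex.ofReal_re, Complex.mul_re, Complex.ofReal_im,
        Complex.I_re, Complex.I_im, mul_zero, mul_one, zero_mul, sub_zero, zero_sub,
        sub_neg_eq_add, add_zero]
    rw [hre']
    rcases mul_eq_zero.1 him' with h | h
    · have hx0 : u.re = 0 := (Real.sin_eq_zero_iff_of_lt_of_lt hu'.1 hu'.2).1 h
      rw [hx0]
      simp only [Real.cos_zero, one_mul]
      linarith [Real.one_le_cosh u.im]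
    · have hy0 : u.im = 0 := Real.sinh_eq_zero.1 h
      rw [hy0]
      simp only [Real.cosh_zero, mul_one]
      exact neg_one_lt_cos_of_mem hu'.1 hu'.2
  have hf : AnalyticOnNhd ℂ (fun u => T (Complex.cos u)) S := by
    apply DifferentiableOn.analyticOnNhd _ hSo
    intro u hu
    exact ((hT.1 _ (hcut u hu)).comp u (Complex.differentiable_cos u)).differentiableWithinAt
  have hg : AnalyticOnNhd ℂ (fun u => Complex.cos ((a : ℂ) * u)) S :=
    ((Complex.differentiable_cos.comp (differentiable_id.const_mul _)).differentiableOn).analyticOnNhd hSo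
  have h0 : (0 : ℂ) ∈ S := by
    simp only [hS, Set.mem_preimage, Complex.zero_re, Set.mem_Ioo]
    exact ⟨by linarith [Real.pi_pos], Real.pi_pos⟩
  have hxval : ∀ x : ℝ, 0 < x → x < 1 →
      T (Complex.cos (x : ℂ)) = Complex.cos ((a : ℂ) * (x : ℂ)) := by
    intro x h0x h1x
    have hπ3 := Real.pi_gt_three
    have hcos_le : Real.cos x ≤ 1 := Real.cos_le_one x
    have hcos_gt : -1 < Real.cos x := by
      have : 0 < Real.cos x := Real.cos_pos_of_mem_Ioo ⟨by linarith, by linarith⟩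
      linarith
    have h2 := hT.2 (Real.cos x) ⟨hcos_gt, hcos_le⟩
    calc T (Complex.cos (x : ℂ)) = T ((Real.cos x : ℝ) : ℂ) := by rw [Complex.ofReal_cos]
      _ = ((Real.cos (a * Real.arccos (Real.cos x)) : ℝ) : ℂ) := h2
      _ = ((Real.cos (a * x) : ℝ) : ℂ) := by rw [Real.arccos_cos h0x.le (by linarith)]
      _ = Complex.cos ((a : ℂ) * (x : ℂ)) := by rw [Complex.ofReal_cos, Complex.ofReal_mul]
  have hfreq : ∃ᶠ z in nhdsWithin (0 : ℂ) {(0 : ℂ)}ᶜ,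
      T (Complex.cos z) = Complex.cos ((a : ℂ) * z) := by
    rw [Filter.frequently_iff]
    intro U hU
    rw [mem_nhdsWithin] at hU
    obtain ⟨V, hVo, h0V, hVU⟩ := hU
    obtain ⟨ε, hε, hball⟩ := Metric.isOpen_iff.1 hVo 0 h0V
    set m : ℝ := min (ε / 2) (1 / 2) with hm
    have hm0 : 0 < m := lt_min (by linarith) (by norm_num)
    have hm1 : m < 1 := lt_of_le_of_lt (min_le_right _ _) (by norm_num)
    have hmε : m < ε := lt_of_le_of_lt (min_le_left _ _) (by linarith)
    refine ⟨((m : ℝ) : ℂ), hVU ⟨hball ?_, ?_⟩, hxval m hm0 hm1⟩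
    · simp only [Metric.mem_ball, Complex.dist_eq, sub_zero, Complex.norm_real, Real.norm_eq_abs]
      rwa [abs_of_pos hm0]
    · simp only [Set.mem_compl_iff, Set.mem_singleton_iff, Complex.ofReal_eq_zero]
      exact hm0.ne'
  have := hf.eqOn_of_preconnected_of_frequently_eq hg hSc h0 hfreq
  intro u hu
  exact this hu


lemma keyId (σ11 σ12 σ22 μ1 μ2 θ1 s r q w : ℝ)
    (h22 : σ22 ≠ 0) (hr : r ≠ 0) (hw : w ≠ 0) (hs : s ≠ 0)
    (hs2 : s ^ 2 = σ11 * σ22) (hw2 : w ^ 2 = σ11 * σ22 - σ12 ^ 2)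
    (hr2 : r ^ 2 = (μ1 * σ12 - μ2 * σ11) ^ 2 + μ1 ^ 2 * (σ11 * σ22 - σ12 ^ 2))
    (hq2 : q ^ 2 = -(θ1 ^ 2 * (σ12 ^ 2 - σ11 * σ22) + 2 * θ1 * (μ2 * σ12 - μ1 * σ22) + μ2 ^ 2)) :
    1 + (q * (σ11 * σ22 - σ12 ^ 2) / (σ22 * r) / (w / s)) ^ 2
      = (s * ((μ2 * σ12 - μ1 * σ22) - (σ11 * σ22 - σ12 ^ 2) * θ1) / (σ22 * r)) ^ 2 := by
  have hD : σ11 * σ22 - σ12 ^ 2 ≠ 0 := by rw [← hw2]; exact pow_ne_zero 2 hw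
  have hE : (μ1 * σ12 - μ2 * σ11) ^ 2 + μ1 ^ 2 * (σ11 * σ22 - σ12 ^ 2) ≠ 0 := by
    rw [← hr2]; exact pow_ne_zero 2 hr
  simp only [div_pow, mul_pow]
  rw [hs2, hw2, hq2, hr2]
  obtain ⟨D, hDdef⟩ : ∃ D, D = σ11 * σ22 - σ12 ^ 2 := ⟨_, rfl⟩
  rw [← hDdef] at hD hE ⊢
  obtain ⟨E, hEdef⟩ : ∃ E, E = (μ1 * σ12 - μ2 * σ11) ^ 2 + μ1 ^ 2 * D := ⟨_, rfl⟩
  rw [← hEdef] at hE ⊢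
  field_simp
  subst hEdef hDdef
  ring
lemma dposId (σ11 σ12 σ22 μ1 μ2 θ1 ρ : ℝ) (hdet : 0 < σ11 * σ22 - σ12 ^ 2)
    (hρ2 : ρ ^ 2 = (μ2 * σ12 - μ1 * σ22) ^ 2 + μ2 ^ 2 * (σ11 * σ22 - σ12 ^ 2))
    (hu2 : ρ ^ 2 < ((μ2 * σ12 - μ1 * σ22) - (σ11 * σ22 - σ12 ^ 2) * θ1) ^ 2) :
    0 < -(θ1 ^ 2 * (σ12 ^ 2 - σ11 * σ22) + 2 * θ1 * (μ2 * σ12 - μ1 * σ22) + μ2 ^ 2) := by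
  have hid : (σ11 * σ22 - σ12 ^ 2) *
      (-(θ1 ^ 2 * (σ12 ^ 2 - σ11 * σ22) + 2 * θ1 * (μ2 * σ12 - μ1 * σ22) + μ2 ^ 2)) =
      ((μ2 * σ12 - μ1 * σ22) - (σ11 * σ22 - σ12 ^ 2) * θ1) ^ 2 -
      ((μ2 * σ12 - μ1 * σ22) ^ 2 + μ2 ^ 2 * (σ11 * σ22 - σ12 ^ 2)) := by ring
  nlinarith [hid, hu2, hρ2, hdet]

lemma AId (σ11 σ12 σ22 μ1 μ2 θ1 s r : ℝ) (h22 : σ22 ≠ 0) (hr : r ≠ 0) (hs : s ≠ 0)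
    (hdet : σ11 * σ22 - σ12 ^ 2 ≠ 0) :
    -σ12 / s * (s * ((μ2 * σ12 - μ1 * σ22) - (σ11 * σ22 - σ12 ^ 2) * θ1) / (σ22 * r))
      = (2 * (μ1 * σ12 - μ2 * σ11) / (σ11 * σ22 - σ12 ^ 2) - 2 * (-(σ12 * θ1 + μ2) / σ22)) /
        (2 * r / (σ11 * σ22 - σ12 ^ 2)) := by
  obtain ⟨D, hDdef⟩ : ∃ D, D = σ11 * σ22 - σ12 ^ 2 := ⟨_, rfl⟩
  rw [← hDdef] at hdet ⊢
  field_simp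
  subst hDdef
  ring

lemma oneSubDiv (σ11 σ12 σ22 s : ℝ) (hs : s ≠ 0) (hs2 : s ^ 2 = σ11 * σ22) :
    1 - (-σ12 / s) ^ 2 = (σ11 * σ22 - σ12 ^ 2) / s ^ 2 := by
  field_simp
  linear_combination hs2

lemma chiEval1 (p m xx yy : ℝ) (h : p - m ≠ 0) :
    chiMap p m ((xx : ℂ) + (yy : ℂ) * Complex.I)
      = (((p + m - 2 * xx) / (p - m) : ℝ) : ℂ) - ((2 * yy / (p - m) : ℝ) : ℂ) * Complex.I := by
  have h' : ((p : ℂ) - (m : ℂ)) ≠ 0 := by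
    rw [← Complex.ofReal_sub]; exact Complex.ofReal_ne_zero.2 h
  unfold chiMap
  push_cast
  field_simp
  ring

lemma chiEval2 (p m xx yy : ℝ) (h : p - m ≠ 0) :
    chiMap p m ((xx : ℂ) - (yy : ℂ) * Complex.I)
      = (((p + m - 2 * xx) / (p - m) : ℝ) : ℂ) + ((2 * yy / (p - m) : ℝ) : ℂ) * Complex.I := by
  have h' : ((p : ℂ) - (m : ℂ)) ≠ 0 := by
    rw [← Complex.ofReal_sub]; exact Complex.ofReal_ne_zero.2 h
  unfold chiMap
  push_cast
  field_simp
  ring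

lemma final_cos (c : ℝ) : Complex.cos ((Real.pi : ℂ) + (c : ℂ) * Complex.I)
    = Complex.cos ((Real.pi : ℂ) + ((-c : ℝ) : ℂ) * Complex.I) := by
  rw [Complex.cos_add_mul_I, Complex.cos_add_mul_I, Complex.sin_pi]
  push_cast
  simp [Complex.cosh_neg]

lemma BId (d22 dD q r : ℝ) (h22 : d22 ≠ 0) (hr : r ≠ 0) (hD : dD ≠ 0) :
    2 * (q / d22) / (2 * r / dD) = q * dD / (d22 * r) := by
  field_simp

/-- The gluing condition on the hyperbola branch: `w(x + iy) = w(x − iy)` for the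
conjugate roots `x ± iy` of `γ(θ₁, ·) = 0`, `θ₁ < θ₁⁻`, where `w = T_{π/β} ∘ χ`. -/
theorem stmt10 (σ11 σ12 σ22 μ1 μ2 : ℝ)
    (h11 : 0 < σ11) (h22 : 0 < σ22) (hdet : 0 < σ11 * σ22 - σ12 ^ 2)
    (hμ1 : μ1 < 0) (hμ2 : μ2 < 0)
    (θ1m θ2p θ2m β : ℝ)
    (hθ1m : θ1m = ((μ2 * σ12 - μ1 * σ22) -
      Real.sqrt ((μ2 * σ12 - μ1 * σ22) ^ 2 + μ2 ^ 2 * (σ11 * σ22 - σ12 ^ 2))) /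
      (σ11 * σ22 - σ12 ^ 2))
    (hθ2p : θ2p = ((μ1 * σ12 - μ2 * σ11) +
      Real.sqrt ((μ1 * σ12 - μ2 * σ11) ^ 2 + μ1 ^ 2 * (σ11 * σ22 - σ12 ^ 2))) /
      (σ11 * σ22 - σ12 ^ 2))
    (hθ2m : θ2m = ((μ1 * σ12 - μ2 * σ11) -
      Real.sqrt ((μ1 * σ12 - μ2 * σ11) ^ 2 + μ1 ^ 2 * (σ11 * σ22 - σ12 ^ 2))) /
      (σ11 * σ22 - σ12 ^ 2))
    (hβ : β = Real.arccos (-σ12 / Real.sqrt (σ11 * σ22)))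
    (T : ℂ → ℂ) (hT : IsChebyshev (Real.pi / β) T) :
    ∀ θ1 : ℝ, θ1 < θ1m → ∀ x y : ℝ,
      x = -(σ12 * θ1 + μ2) / σ22 →
      y = Real.sqrt (-(θ1 ^ 2 * (σ12 ^ 2 - σ11 * σ22) + 2 * θ1 * (μ2 * σ12 - μ1 * σ22)
            + μ2 ^ 2)) / σ22 →
      T (chiMap θ2p θ2m ((x : ℂ) + (y : ℂ) * Complex.I)) =
        T (chiMap θ2p θ2m ((x : ℂ) - (y : ℂ) * Complex.I)) := by
  intro θ1 hθ1 x y hx hy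
  have hs : 0 < Real.sqrt (σ11 * σ22) := Real.sqrt_pos.2 (by positivity)
  set s := Real.sqrt (σ11 * σ22) with hsdef
  have hs2 : s ^ 2 = σ11 * σ22 := Real.sq_sqrt (by positivity)
  have hσ12sq : σ12 ^ 2 < s ^ 2 := by rw [hs2]; linarith
  have hσ12lt : σ12 < s := by nlinarith
  have hσ12gt : -s < σ12 := by nlinarith
  have hcb : Real.cos β = -σ12 / s := by
    rw [hβ]
    exact Real.cos_arccos (by rw [le_div_iff₀ hs]; linarith) (by rw [div_le_one hs]; linarith)
  have h0β : 0 < β := by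
    rw [hβ]; exact Real.arccos_pos.2 (by rw [div_lt_one hs]; linarith)
  have hβπ : β < Real.pi := by
    rcases lt_or_eq_of_le (hβ ▸ Real.arccos_le_pi (-σ12 / s)) with h | h
    · exact h
    · exfalso
      have hc : Real.cos β = -1 := by rw [h, Real.cos_pi]
      rw [hcb, div_eq_iff hs.ne'] at hc
      linarith
  have hwpos : 0 < Real.sqrt (σ11 * σ22 - σ12 ^ 2) := Real.sqrt_pos.2 hdet
  set w := Real.sqrt (σ11 * σ22 - σ12 ^ 2) with hwdef
  have hw2 : w ^ 2 = σ11 * σ22 - σ12 ^ 2 := Real.sq_sqrt hdet.le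
  have hsb : Real.sin β = w / s := by
    rw [hβ, Real.sin_arccos, oneSubDiv σ11 σ12 σ22 s hs.ne' hs2, Real.sqrt_div hdet.le,
      Real.sqrt_sq hs.le, ← hwdef]
  have hsbpos : 0 < Real.sin β := by rw [hsb]; positivity
  have hμ1sq : 0 < μ1 ^ 2 := by rw [sq]; exact mul_pos_of_neg_of_neg hμ1 hμ1
  have hμ2sq : 0 < μ2 ^ 2 := by rw [sq]; exact mul_pos_of_neg_of_neg hμ2 hμ2
  have hE : 0 < (μ1 * σ12 - μ2 * σ11) ^ 2 + μ1 ^ 2 * (σ11 * σ22 - σ12 ^ 2) :=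
    add_pos_of_nonneg_of_pos (sq_nonneg _) (mul_pos hμ1sq hdet)
  set r := Real.sqrt ((μ1 * σ12 - μ2 * σ11) ^ 2 + μ1 ^ 2 * (σ11 * σ22 - σ12 ^ 2)) with hrdef
  have hrpos : 0 < r := Real.sqrt_pos.2 hE
  have hr2 : r ^ 2 = (μ1 * σ12 - μ2 * σ11) ^ 2 + μ1 ^ 2 * (σ11 * σ22 - σ12 ^ 2) :=
    Real.sq_sqrt hE.le
  have hdiff : θ2p - θ2m = 2 * r / (σ11 * σ22 - σ12 ^ 2) := by rw [hθ2p, hθ2m]; ring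
  have hsum : θ2p + θ2m = 2 * (μ1 * σ12 - μ2 * σ11) / (σ11 * σ22 - σ12 ^ 2) := by
    rw [hθ2p, hθ2m]; ring
  have hdiffpos : 0 < θ2p - θ2m := by rw [hdiff]; positivity
  have hρE : 0 < (μ2 * σ12 - μ1 * σ22) ^ 2 + μ2 ^ 2 * (σ11 * σ22 - σ12 ^ 2) :=
    add_pos_of_nonneg_of_pos (sq_nonneg _) (mul_pos hμ2sq hdet)
  set ρ := Real.sqrt ((μ2 * σ12 - μ1 * σ22) ^ 2 + μ2 ^ 2 * (σ11 * σ22 - σ12 ^ 2)) with hρdef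
  have hρpos : 0 < ρ := Real.sqrt_pos.2 hρE
  have hρ2 : ρ ^ 2 = (μ2 * σ12 - μ1 * σ22) ^ 2 + μ2 ^ 2 * (σ11 * σ22 - σ12 ^ 2) :=
    Real.sq_sqrt hρE.le
  have hθ1lt : θ1 * (σ11 * σ22 - σ12 ^ 2) < (μ2 * σ12 - μ1 * σ22) - ρ := by
    rw [hθ1m] at hθ1
    exact (lt_div_iff₀ hdet).1 hθ1
  have hu : ρ < (μ2 * σ12 - μ1 * σ22) - (σ11 * σ22 - σ12 ^ 2) * θ1 := by linarith [hθ1lt]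
  have hu2 : ρ ^ 2 < ((μ2 * σ12 - μ1 * σ22) - (σ11 * σ22 - σ12 ^ 2) * θ1) ^ 2 :=
    pow_lt_pow_left₀ hu hρpos.le two_ne_zero
  have hdpos := dposId σ11 σ12 σ22 μ1 μ2 θ1 ρ hdet hρ2 hu2
  set q := Real.sqrt (-(θ1 ^ 2 * (σ12 ^ 2 - σ11 * σ22) + 2 * θ1 * (μ2 * σ12 - μ1 * σ22)
      + μ2 ^ 2)) with hqdef
  have hq2 : q ^ 2 = -(θ1 ^ 2 * (σ12 ^ 2 - σ11 * σ22) + 2 * θ1 * (μ2 * σ12 - μ1 * σ22)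
      + μ2 ^ 2) := Real.sq_sqrt hdpos.le
  rw [chiEval1 θ2p θ2m x y hdiffpos.ne', chiEval2 θ2p θ2m x y hdiffpos.ne']
  set A := (θ2p + θ2m - 2 * x) / (θ2p - θ2m) with hA
  set Bv := 2 * y / (θ2p - θ2m) with hBv
  set t := Real.arsinh (Bv / Real.sin β) with ht
  have hsinh : Real.sin β * Real.sinh t = Bv := by
    rw [ht, Real.sinh_arsinh]
    field_simp
  have hBq : Bv = q * (σ11 * σ22 - σ12 ^ 2) / (σ22 * r) := by
    rw [hBv, hy, hdiff]
    exact BId σ22 (σ11 * σ22 - σ12 ^ 2) q r h22.ne' hrpos.ne' hdet.ne'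
  have hBsin : Bv / Real.sin β = q * (σ11 * σ22 - σ12 ^ 2) / (σ22 * r) / (w / s) := by
    rw [hBq, hsb]
  have hkeyeq := keyId σ11 σ12 σ22 μ1 μ2 θ1 s r q w h22.ne' hrpos.ne' hwpos.ne' hs.ne'
    hs2 hw2 hr2 hq2
  have hCnn : 0 ≤ s * ((μ2 * σ12 - μ1 * σ22) - (σ11 * σ22 - σ12 ^ 2) * θ1) / (σ22 * r) :=
    div_nonneg (mul_nonneg hs.le (by linarith [hu, hρpos])) (by positivity)
  have hcosh : Real.cos β * Real.cosh t = A := by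
    rw [ht, Real.cosh_arsinh, hBsin, hkeyeq, Real.sqrt_sq hCnn, hcb, hA, hsum, hdiff, hx]
    exact AId σ11 σ12 σ22 μ1 μ2 θ1 s r h22.ne' hrpos.ne' hs.ne' hdet.ne'
  have hcos1 : ((A : ℂ) - (Bv : ℂ) * Complex.I) = Complex.cos ((β : ℂ) + (t : ℂ) * Complex.I) := by
    rw [Complex.cos_add_mul_I, ← Complex.ofReal_cos, ← Complex.ofReal_sin,
      ← Complex.ofReal_cosh, ← Complex.ofReal_sinh, ← hcosh, ← hsinh]
    push_cast
    ring
  have hcos2 : ((A : ℂ) + (Bv : ℂ) * Complex.I)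
      = Complex.cos ((β : ℂ) + ((-t : ℝ) : ℂ) * Complex.I) := by
    rw [Complex.cos_add_mul_I, ← Complex.ofReal_cos, ← Complex.ofReal_sin,
      ← Complex.ofReal_cosh, ← Complex.ofReal_sinh, Real.cosh_neg, Real.sinh_neg,
      ← hcosh, ← hsinh]
    push_cast
    ring
  have hmem : ∀ t' : ℝ, ((β : ℂ) + (t' : ℂ) * Complex.I).re ∈ Set.Ioo (-Real.pi) Real.pi := by
    intro t'
    have h1 : ((β : ℂ) + (t' : ℂ) * Complex.I).re = β := by simp
    rw [h1]
    exact ⟨by linarith [Real.pi_pos], hβπ⟩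
  rw [hcos1, hcos2, cheb_eq hT _ (hmem t), cheb_eq hT _ (hmem (-t))]
  have hab : Real.pi / β * β = Real.pi := div_mul_cancel₀ _ h0β.ne'
  have e1 : ((Real.pi / β : ℝ) : ℂ) * ((β : ℂ) + (t : ℂ) * Complex.I) =
      ((Real.pi : ℝ) : ℂ) + ((Real.pi / β * t : ℝ) : ℂ) * Complex.I := by
    rw [show ((Real.pi / β : ℝ) : ℂ) * ((β : ℂ) + (t : ℂ) * Complex.I)
        = ((Real.pi / β * β : ℝ) : ℂ) + ((Real.pi / β * t : ℝ) : ℂ) * Complex.I by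
          push_cast; ring,
      hab]
  have e2 : ((Real.pi / β : ℝ) : ℂ) * ((β : ℂ) + ((-t : ℝ) : ℂ) * Complex.I) =
      ((Real.pi : ℝ) : ℂ) + ((-(Real.pi / β * t) : ℝ) : ℂ) * Complex.I := by
    rw [show ((Real.pi / β : ℝ) : ℂ) * ((β : ℂ) + ((-t : ℝ) : ℂ) * Complex.I)
        = ((Real.pi / β * β : ℝ) : ℂ) + ((-(Real.pi / β * t) : ℝ) : ℂ) * Complex.I by
          push_cast; ring,
      hab]
  rw [e1, e2]
  exact final_cos (Real.pi / β * t)
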